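/- (Leitmann's power quantum fundamental lemma) Let a, b ∈ I with a < b, α, β ∈ ℝ, and let f, f̄ : ℝ × ℝ × ℝ → ℝ be Lagrangians defining L[y] = ∫_a^b f(t, y(q·t^n), D_{n,q} y(t)) d_{n,q}t and L̄[ȳ] = ∫_a^b f̄(t, ȳ(q·t^n), D_{n,q} ȳ(t)) d_{n,q}t over functions in 𝔼 (functions y : ℝ → ℝ such that y and D_{n,q} y are continuous at 0 and bounded on [a,b]_{n,q}), where y ranges over 𝔼 with y(a) = α, y(b) = β and ȳ ranges over 𝔼 with ȳ(a) = z̄(a, α), ȳ(b) = z̄(b, β). Let y = z(t, ȳ) be a transformation with unique inverse ȳ = z̄(t, y) for all t ∈ [a,b]_{n,q}, giving a one-to-one correspondence y ↔ ȳ between these two classes of functions (with z(·, ȳ(·)) ∈ 𝔼 whenever ȳ ∈ 𝔼 and conversely). Suppose there exists G : ℝ × ℝ → ℝ such that for every corresponding pair (y, ȳ) the identity f(t, y(q·t^n), D_{n,q} y(t)) − f̄(t, ȳ(q·t^n), D_{n,q} ȳ(t)) = D_{n,q}( t ↦ G(t, ȳ(t)) )(t) holds for all t ∈ [a,b]_{n,q},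 with t ↦ G(t, ȳ(t)) continuous at 0 and the series defining its n,q-integrals convergent. Then L[y] − L̄[ȳ] = G(b, z̄(b, β)) − G(a, z̄(a, α)) for every corresponding pair; consequently, if ȳ* yields the extremum of L̄ over its class, then y* = z(·, ȳ*) yields the extremum of L over its class. -/

import Mathlib

open Filter
open scoped Classical

noncomputable section

/-- `[k]_n = ∑_{i=0}^{k-1} n^i` (so `[0]_n = 0`). -/
def nbr (n k : ℕ) : ℕ := ∑ i ∈ Finset.range k, n ^ i

/-- `h(t) = q·t^n`. -/
def hfun (q : ℝ) (n : ℕ) (t : ℝ) : ℝ := q * t ^ n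

/-- `θ = q^(1/(1-n))` (meaningful for `n ≥ 3`). -/
def theta (q : ℝ) (n : ℕ) : ℝ := q ^ ((1 : ℝ) / (1 - (n : ℝ)))

/-- `S = {0}` if `n = 1`, and `S = {-θ, 0, θ}` if `n ≥ 3`. -/
def Sset (q : ℝ) (n : ℕ) : Set ℝ :=
  if n = 1 then {0} else {-theta q n, 0, theta q n}

/-- `I = (-θ, θ)` (all of `ℝ` when `n = 1`). -/
def Iset (q : ℝ) (n : ℕ) : Set ℝ :=
  if n = 1 then Set.univ else Set.Ioo (-theta q n) (theta q n)

/-- The `n,q`-power difference operator `D_{n,q}`. -/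
def Dnq (q : ℝ) (n : ℕ) (f : ℝ → ℝ) (t : ℝ) : ℝ :=
  if t ∈ Sset q n then deriv f t
  else (f (q * t ^ n) - f t) / (q * t ^ n - t)

/-- The `k`-th summand of the series defining the `n,q`-integral `∫_0^x f(t) d_{n,q}t`. -/
def nqSeq (q : ℝ) (n : ℕ) (f : ℝ → ℝ) (x : ℝ) (k : ℕ) : ℝ :=
  q ^ nbr n k * x ^ n ^ k * (q ^ n ^ k * x ^ (n ^ k * (n - 1)) - 1) *
    f (q ^ nbr n k * x ^ n ^ k)

/-- `∫_0^x f(t) d_{n,q}t`. -/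
def nqInt0 (q : ℝ) (n : ℕ) (f : ℝ → ℝ) (x : ℝ) : ℝ := -∑' k : ℕ, nqSeq q n f x k

/-- `∫_a^b f(t) d_{n,q}t = ∫_0^b f(t) d_{n,q}t − ∫_0^a f(t) d_{n,q}t`. -/
def nqInt (q : ℝ) (n : ℕ) (f : ℝ → ℝ) (a b : ℝ) : ℝ :=
  nqInt0 q n f b - nqInt0 q n f a

/-- The orbit `[s]_{n,q} = {q^{[k]_n}·s^{n^k} : k ∈ ℕ}`. -/
def nqOrbit (q : ℝ) (n : ℕ) (s : ℝ) : Set ℝ :=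
  Set.range fun k : ℕ => q ^ nbr n k * s ^ n ^ k

/-- The `n,q`-interval `[a,b]_{n,q}`. -/
def nqInterval (q : ℝ) (n : ℕ) (a b : ℝ) : Set ℝ :=
  nqOrbit q n a ∪ nqOrbit q n b ∪ {0}

/-- The class `𝔼`: `y` is `n,q`-differentiable with `y` and `D_{n,q} y`
continuous at `0` and bounded on `[a,b]_{n,q}`. -/
def Emem (q : ℝ) (n : ℕ) (a b : ℝ) (y : ℝ → ℝ) : Prop :=
  DifferentiableAt ℝ y 0 ∧
  ContinuousAt y 0 ∧ ContinuousAt (Dnq q n y) 0 ∧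
  (∃ C, ∀ t ∈ nqInterval q n a b, |y t| ≤ C) ∧
  (∃ C, ∀ t ∈ nqInterval q n a b, |Dnq q n y t| ≤ C)

/-- The norm `‖y‖₁ = sup_{t∈[a,b]_{n,q}} |y(t)| + sup_{t∈[a,b]_{n,q}} |D_{n,q} y(t)|`. -/
def norm1 (q : ℝ) (n : ℕ) (a b : ℝ) (y : ℝ → ℝ) : ℝ :=
  sSup ((fun t => |y t|) '' nqInterval q n a b) +
    sSup ((fun t => |Dnq q n y t|) '' nqInterval q n a b)

/-- The variational functional `L[y] = ∫_a^b f(t, y(q t^n), D_{n,q} y(t)) d_{n,q}t`. -/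
def Lfun (q : ℝ) (n : ℕ) (a b : ℝ) (f : ℝ → ℝ → ℝ → ℝ) (y : ℝ → ℝ) : ℝ :=
  nqInt q n (fun t => f t (y (q * t ^ n)) (Dnq q n y t)) a b


namespace Aux19

lemma nbr_succ (n k : ℕ) : nbr n (k+1) = nbr n k + n ^ k := Finset.sum_range_succ _ _

lemma nbr_key (n k : ℕ) : 1 + n * nbr n k = nbr n k + n ^ k := by
  induction k with
  | zero => simp [nbr]
  | succ k ih =>
    rw [nbr_succ, Nat.mul_add, ← Nat.add_assoc, ih, pow_succ]
    ring

lemma nbr_succ' (n k : ℕ) : nbr n (k+1) = 1 + n * nbr n k := by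
  rw [nbr_key, nbr_succ]

lemma nbr_real (n : ℝ) (k : ℕ) : (n - 1) * (∑ i ∈ Finset.range k, n ^ i) = n ^ k - 1 := by
  induction k with
  | zero => simp
  | succ k ih =>
    rw [Finset.sum_range_succ, mul_add, ih, pow_succ]
    ring

/-- the orbit points -/
def tk (q : ℝ) (n : ℕ) (x : ℝ) (k : ℕ) : ℝ := q ^ nbr n k * x ^ n ^ k

lemma tk_mem_orbit (q : ℝ) (n : ℕ) (x : ℝ) (k : ℕ) : tk q n x k ∈ nqOrbit q n x :=
  ⟨k, rfl⟩

lemma tk_next (q : ℝ) (n : ℕ) (x : ℝ) (k : ℕ) :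
    q * (tk q n x k) ^ n = tk q n x (k+1) := by
  unfold tk
  rw [mul_pow, ← pow_mul, ← pow_mul, nbr_succ', pow_succ, pow_add, pow_one,
    Nat.mul_comm (nbr n k) n]
  ring

lemma tk_coeff (q : ℝ) (n : ℕ) (hn : 1 ≤ n) (x : ℝ) (k : ℕ) :
    q ^ nbr n k * x ^ n ^ k * (q ^ n ^ k * x ^ (n ^ k * (n - 1)) - 1)
      = q * (tk q n x k) ^ n - tk q n x k := by
  have h1 : n ^ k + n ^ k * (n - 1) = n ^ (k+1) := by
    rw [pow_succ]
    calc n ^ k + n ^ k * (n-1) = n ^ k * ((n-1) + 1) := by ring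
    _ = n ^ k * n := by rw [Nat.sub_add_cancel hn]
  rw [tk_next]
  simp only [tk]
  rw [mul_sub, mul_one]
  congr 1
  rw [nbr_succ, pow_add, ← h1, pow_add]
  ring

lemma theta_pos {q : ℝ} (hq0 : 0 < q) (n : ℕ) : 0 < theta q n :=
  Real.rpow_pos_of_pos hq0 _

lemma theta_pow {q : ℝ} (hq0 : 0 < q) (n m : ℕ) :
    (theta q n) ^ m = q ^ ((m : ℝ)/(1 - (n : ℝ))) := by
  rw [theta, ← Real.rpow_natCast (q ^ ((1:ℝ)/(1-(n:ℝ)))) m, ← Real.rpow_mul hq0.le]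
  congr 1
  ring

lemma cast_ne {n : ℕ} (hn2 : 2 ≤ n) : (1 : ℝ) - (n : ℝ) ≠ 0 := by
  have : (2 : ℝ) ≤ (n : ℝ) := by exact_mod_cast hn2
  linarith

lemma q_mul_theta_pred {q : ℝ} (hq0 : 0 < q) {n : ℕ} (hn2 : 2 ≤ n) :
    q * (theta q n) ^ (n - 1) = 1 := by
  have hne := cast_ne hn2
  rw [theta_pow hq0]
  nth_rewrite 1 [← Real.rpow_one q]
  rw [← Real.rpow_add hq0]
  have hc : ((n - 1 : ℕ) : ℝ) = (n : ℝ) - 1 := by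
    have : 1 ≤ n := by omega
    push_cast [this]; ring
  rw [hc, show (1 : ℝ) + ((n:ℝ)-1)/(1-(n:ℝ)) = 0 by field_simp; ring, Real.rpow_zero]

lemma q_mul_theta_n {q : ℝ} (hq0 : 0 < q) {n : ℕ} (hn2 : 2 ≤ n) :
    q * (theta q n) ^ n = theta q n := by
  rw [show (theta q n) ^ n = (theta q n) ^ (n-1) * theta q n by
      rw [← pow_succ]; congr 1; omega,
    ← mul_assoc, q_mul_theta_pred hq0 hn2, one_mul]

lemma orbit_theta {q : ℝ} (hq0 : 0 < q) {n : ℕ} (hn2 : 2 ≤ n) (k : ℕ) :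
    q ^ nbr n k * (theta q n) ^ (n ^ k) = theta q n := by
  have hne := cast_ne hn2
  rw [theta_pow hq0, theta, ← Real.rpow_natCast q (nbr n k), ← Real.rpow_add hq0]
  congr 1
  have key : ((n:ℝ) - 1) * ((nbr n k : ℕ) : ℝ) = (n:ℝ)^k - 1 := by
    have h := nbr_real (n:ℝ) k
    rw [show ((nbr n k : ℕ) : ℝ) = ∑ i ∈ Finset.range k, (n:ℝ) ^ i by push_cast [nbr]; ring]
    exact h
  have hc : ((n ^ k : ℕ) : ℝ) = (n : ℝ) ^ k := by push_cast; ring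
  rw [hc]
  field_simp
  nlinarith [key]

lemma abs_tk {q : ℝ} (hq0 : 0 < q) {n : ℕ} (hn2 : 2 ≤ n) (x : ℝ) (k : ℕ) :
    |tk q n x k| = theta q n * (|x| / theta q n) ^ (n ^ k) := by
  have ht := theta_pos hq0 n
  have htk : (theta q n) ^ (n ^ k) > 0 := pow_pos ht _
  have h := orbit_theta hq0 hn2 (q := q) k
  have hq' : q ^ nbr n k = theta q n / (theta q n) ^ (n ^ k) := by
    field_simp
    linarith [h]
  rw [tk, abs_mul, abs_pow, abs_pow, abs_of_pos hq0, hq', div_pow]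
  field_simp

lemma abs_tk_lt {q : ℝ} (hq0 : 0 < q) {n : ℕ} (hn2 : 2 ≤ n) {x : ℝ}
    (hx : |x| < theta q n) (k : ℕ) : |tk q n x k| < theta q n := by
  have ht := theta_pos hq0 n
  rw [abs_tk hq0 hn2]
  have hr0 : 0 ≤ |x| / theta q n := by positivity
  have hr1 : |x| / theta q n < 1 := (div_lt_one ht).2 hx
  have : (|x| / theta q n) ^ (n ^ k) < 1 :=
    pow_lt_one₀ hr0 hr1 (by positivity)
  nlinarith

lemma nbr_one (k : ℕ) : nbr 1 k = k := by simp [nbr]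

lemma tendsto_tk {q : ℝ} (hq0 : 0 < q) (hq1 : q < 1) {n : ℕ} (hn : 1 ≤ n) {x : ℝ}
    (hx : x ∈ Iset q n) : Filter.Tendsto (tk q n x) Filter.atTop (nhds 0) := by
  by_cases h1 : n = 1
  · subst h1
    have heq : tk q 1 x = fun k => q ^ k * x := by
      funext k
      simp [tk, nbr_one]
    rw [heq]
    rw [show (0:ℝ) = 0 * x by ring]
    exact (tendsto_pow_atTop_nhds_zero_of_lt_one hq0.le hq1).mul_const x
  · have hn2 : 2 ≤ n := by omega
    have ht := theta_pos hq0 n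
    have hxθ : |x| < theta q n := by
      rw [Iset, if_neg h1] at hx
      rw [abs_lt]; exact ⟨hx.1, hx.2⟩
    have hr0 : 0 ≤ |x| / theta q n := by positivity
    have hr1 : |x| / theta q n < 1 := (div_lt_one ht).2 hxθ
    have hlim : Filter.Tendsto (fun k => theta q n * (|x| / theta q n) ^ k)
        Filter.atTop (nhds 0) := by
      rw [show (0:ℝ) = theta q n * 0 by ring]
      exact (tendsto_pow_atTop_nhds_zero_of_lt_one hr0 hr1).const_mul _
    refine squeeze_zero_norm (fun k => ?_) hlim
    rw [Real.norm_eq_abs, abs_tk hq0 hn2]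
    have hk : k ≤ n ^ k := Nat.le_of_lt (Nat.lt_pow_self hn2 : k < n ^ k)
    have := pow_le_pow_of_le_one hr0 hr1.le hk
    nlinarith

lemma fixed_iff_mem_Sset {q : ℝ} (hq0 : 0 < q) (hq1 : q < 1) {n : ℕ} (hn : Odd n)
    (t : ℝ) : q * t ^ n = t ↔ t ∈ Sset q n := by
  have hn1 : 1 ≤ n := hn.pos
  by_cases h1 : n = 1
  · subst h1
    rw [Sset, if_pos rfl]
    simp only [pow_one, Set.mem_singleton_iff]
    constructor
    · intro h
      by_contra ht
      have : q = 1 := by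
        field_simp at h
        rcases mul_eq_mul_right_iff.1 (by linarith [h] : q * t = 1 * t) with h' | h'
        · exact h'
        · exact absurd h' ht
      linarith
    · rintro rfl; ring
  · have hn2 : 2 ≤ n := by omega
    have ht := theta_pos hq0 n
    rw [Sset, if_neg h1]
    simp only [Set.mem_insert_iff, Set.mem_singleton_iff]
    constructor
    · intro h
      by_cases ht0 : t = 0
      · right; left; exact ht0
      · have hstep : q * t ^ (n - 1) = 1 := by
          have hpow : t ^ n = t ^ (n-1) * t := by
            rw [← pow_succ]; congr 1; omega
          rw [hpow] at h
          have := mul_right_cancel₀ ht0 (by linarith [h] : q * t ^ (n-1) * t = 1 * t)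
          linarith [this]
        have heven : Even (n - 1) := Nat.Odd.sub_odd hn odd_one
        have habs : q * |t| ^ (n - 1) = 1 := by rw [heven.pow_abs]; exact hstep
        have hteq : |t| = theta q n := by
          have h2 := q_mul_theta_pred hq0 hn2
          have : |t| ^ (n-1) = (theta q n) ^ (n-1) := by
            have hq' : q ≠ 0 := ne_of_gt hq0
            exact mul_left_cancel₀ hq' (habs.trans h2.symm)
          exact (pow_left_inj₀ (abs_nonneg t) ht.le (by omega)).1 this
        rcases abs_eq ht.le |>.1 hteq with h' | h'
        · right; right; exact h'
        · left; exact h'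
    · rintro (rfl | rfl | rfl)
      · rw [hn.neg_pow]
        have := q_mul_theta_n hq0 hn2
        ring_nf
        ring_nf at this
        linarith [this]
      · rw [zero_pow (by omega : n ≠ 0)]; ring
      · exact q_mul_theta_n hq0 hn2

lemma nqSeq_Dnq {q : ℝ} (hq0 : 0 < q) (hq1 : q < 1) {n : ℕ} (hn : Odd n)
    (F : ℝ → ℝ) (x : ℝ) (k : ℕ) :
    nqSeq q n (Dnq q n F) x k = F (tk q n x (k+1)) - F (tk q n x k) := by
  have hn1 : 1 ≤ n := hn.pos
  show q ^ nbr n k * x ^ n ^ k * (q ^ n ^ k * x ^ (n ^ k * (n - 1)) - 1) *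
      Dnq q n F (tk q n x k) = _
  rw [tk_coeff q n hn1 x k, ← tk_next q n x k]
  set t := tk q n x k with htdef
  by_cases hS : t ∈ Sset q n
  · have hfix : q * t ^ n = t := (fixed_iff_mem_Sset hq0 hq1 hn t).2 hS
    rw [hfix]
    simp
  · have hfix : q * t ^ n ≠ t := fun h => hS ((fixed_iff_mem_Sset hq0 hq1 hn t).1 h)
    rw [Dnq, if_neg hS]
    rw [mul_div_assoc']
    rw [mul_comm, mul_div_assoc]
    rw [div_self (sub_ne_zero.2 hfix), mul_one]

lemma tk_zero (q : ℝ) (n : ℕ) (x : ℝ) : tk q n x 0 = x := by simp [tk, nbr]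

lemma nqInt0_Dnq {q : ℝ} (hq0 : 0 < q) (hq1 : q < 1) {n : ℕ} (hn : Odd n)
    (F : ℝ → ℝ) {x : ℝ} (hx : x ∈ Iset q n)
    (hsum : Summable (nqSeq q n (Dnq q n F) x)) (hF : ContinuousAt F 0) :
    nqInt0 q n (Dnq q n F) x = F x - F 0 := by
  have htel : ∀ K, ∑ k ∈ Finset.range K, nqSeq q n (Dnq q n F) x k
      = F (tk q n x K) - F x := by
    intro K
    have : ∀ k ∈ Finset.range K, nqSeq q n (Dnq q n F) x k
        = F (tk q n x (k+1)) - F (tk q n x k) := fun k _ => nqSeq_Dnq hq0 hq1 hn F x k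
    rw [Finset.sum_congr rfl this, Finset.sum_range_sub (fun k => F (tk q n x k)),
      tk_zero]
  have hps : Filter.Tendsto (fun K => ∑ k ∈ Finset.range K, nqSeq q n (Dnq q n F) x k)
      Filter.atTop (nhds (F 0 - F x)) := by
    simp only [htel]
    exact (hF.tendsto.comp (tendsto_tk hq0 hq1 hn.pos hx)).sub_const (F x)
  have h2 := hsum.hasSum.tendsto_sum_nat
  have h3 : ∑' k, nqSeq q n (Dnq q n F) x k = F 0 - F x := tendsto_nhds_unique h2 hps
  rw [nqInt0, h3]
  ring

lemma nqInt_Dnq {q : ℝ} (hq0 : 0 < q) (hq1 : q < 1) {n : ℕ} (hn : Odd n)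
    (F : ℝ → ℝ) {a b : ℝ} (ha : a ∈ Iset q n) (hb : b ∈ Iset q n)
    (hsa : Summable (nqSeq q n (Dnq q n F) a)) (hsb : Summable (nqSeq q n (Dnq q n F) b))
    (hF : ContinuousAt F 0) :
    nqInt q n (Dnq q n F) a b = F b - F a := by
  rw [nqInt, nqInt0_Dnq hq0 hq1 hn F hb hsb hF, nqInt0_Dnq hq0 hq1 hn F ha hsa hF]
  ring

lemma orbit_subset_left (q : ℝ) (n : ℕ) (a b : ℝ) :
    nqOrbit q n a ⊆ nqInterval q n a b := fun t ht => Or.inl (Or.inl ht)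

lemma orbit_subset_right (q : ℝ) (n : ℕ) (a b : ℝ) :
    nqOrbit q n b ⊆ nqInterval q n a b := fun t ht => Or.inl (Or.inr ht)

lemma tk_not_mem_Sset {q : ℝ} (hq0 : 0 < q) {n : ℕ} (hn : 1 ≤ n) {x : ℝ}
    (hx : x ∈ Iset q n) (hx0 : x ≠ 0) (k : ℕ) : tk q n x k ∉ Sset q n := by
  have htne : tk q n x k ≠ 0 :=
    mul_ne_zero (pow_ne_zero _ (ne_of_gt hq0)) (pow_ne_zero _ hx0)
  by_cases h1 : n = 1
  · subst h1
    rw [Sset, if_pos rfl]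
    simpa using htne
  · have hn2 : 2 ≤ n := by omega
    have ht := theta_pos hq0 n
    have hxθ : |x| < theta q n := by
      rw [Iset, if_neg h1] at hx
      rw [abs_lt]; exact ⟨hx.1, hx.2⟩
    have hlt := abs_tk_lt hq0 hn2 hxθ k
    rw [Sset, if_neg h1]
    intro hmem
    rcases hmem with h' | h' | h'
    · rw [h'] at hlt; rw [abs_neg, abs_of_pos ht] at hlt; exact absurd hlt (lt_irrefl _)
    · exact htne h'
    · rw [h'] at hlt; rw [abs_of_pos ht] at hlt; exact absurd hlt (lt_irrefl _)

lemma nqSeq_integrand_congr {q : ℝ} (hq0 : 0 < q) {n : ℕ} (hn : 1 ≤ n)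
    {a b : ℝ} (f : ℝ → ℝ → ℝ → ℝ) {w1 w2 : ℝ → ℝ}
    (hw : ∀ t ∈ nqInterval q n a b, w1 t = w2 t) {x : ℝ} (hx : x ∈ Iset q n)
    (horb : nqOrbit q n x ⊆ nqInterval q n a b) :
    nqSeq q n (fun t => f t (w1 (q * t ^ n)) (Dnq q n w1 t)) x
      = nqSeq q n (fun t => f t (w2 (q * t ^ n)) (Dnq q n w2 t)) x := by
  funext k
  by_cases hx0 : x = 0
  · subst hx0
    simp [nqSeq, zero_pow (pow_ne_zero k (by omega : n ≠ 0))]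
  · have hS := tk_not_mem_Sset hq0 hn hx hx0 k
    have ht : tk q n x k ∈ nqInterval q n a b := horb (tk_mem_orbit q n x k)
    have e1 : w1 (q * (tk q n x k) ^ n) = w2 (q * (tk q n x k) ^ n) := by
      rw [tk_next]; exact hw _ (horb (tk_mem_orbit q n x (k+1)))
    have e2 : w1 (tk q n x k) = w2 (tk q n x k) := hw _ ht
    show q ^ nbr n k * x ^ n ^ k * (q ^ n ^ k * x ^ (n ^ k * (n - 1)) - 1) *
        f (tk q n x k) (w1 (q * (tk q n x k) ^ n)) (Dnq q n w1 (tk q n x k))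
      = q ^ nbr n k * x ^ n ^ k * (q ^ n ^ k * x ^ (n ^ k * (n - 1)) - 1) *
        f (tk q n x k) (w2 (q * (tk q n x k) ^ n)) (Dnq q n w2 (tk q n x k))
    rw [e1, Dnq, Dnq, if_neg hS, if_neg hS, e1, e2]

lemma Lfun_congr {q : ℝ} (hq0 : 0 < q) {n : ℕ} (hn : 1 ≤ n)
    {a b : ℝ} (ha : a ∈ Iset q n) (hb : b ∈ Iset q n)
    (f : ℝ → ℝ → ℝ → ℝ) {w1 w2 : ℝ → ℝ}
    (hw : ∀ t ∈ nqInterval q n a b, w1 t = w2 t) :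
    Lfun q n a b f w1 = Lfun q n a b f w2 := by
  unfold Lfun nqInt nqInt0
  rw [nqSeq_integrand_congr hq0 hn f hw ha (orbit_subset_left q n a b),
    nqSeq_integrand_congr hq0 hn f hw hb (orbit_subset_right q n a b)]

end Aux19

open Aux19 in
theorem stmt19 (q : ℝ) (hq0 : 0 < q) (hq1 : q < 1) (n : ℕ) (hn : Odd n)
    (a b : ℝ) (ha : a ∈ Iset q n) (hb : b ∈ Iset q n) (hab : a < b)
    (α β : ℝ) (f fbar : ℝ → ℝ → ℝ → ℝ) (z zbar : ℝ → ℝ → ℝ) (G : ℝ → ℝ → ℝ)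
    (hinv1 : ∀ t ∈ nqInterval q n a b, ∀ v : ℝ, zbar t (z t v) = v)
    (hinv2 : ∀ t ∈ nqInterval q n a b, ∀ v : ℝ, z t (zbar t v) = v)
    (hcorr1 : ∀ ybar : ℝ → ℝ, Emem q n a b ybar →
      Emem q n a b (fun t => z t (ybar t)))
    (hcorr2 : ∀ y : ℝ → ℝ, Emem q n a b y →
      Emem q n a b (fun t => zbar t (y t)))
    (hG : ∀ ybar : ℝ → ℝ, Emem q n a b ybar →
      ybar a = zbar a α → ybar b = zbar b β →
      (∀ t ∈ nqInterval q n a b,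
        f t (z (q * t ^ n) (ybar (q * t ^ n))) (Dnq q n (fun τ => z τ (ybar τ)) t)
            - fbar t (ybar (q * t ^ n)) (Dnq q n ybar t)
          = Dnq q n (fun τ => G τ (ybar τ)) t) ∧
      ContinuousAt (fun τ => G τ (ybar τ)) 0 ∧
      Summable (nqSeq q n (Dnq q n (fun τ => G τ (ybar τ))) a) ∧
      Summable (nqSeq q n (Dnq q n (fun τ => G τ (ybar τ))) b) ∧
      Summable (nqSeq q n (fun t => fbar t (ybar (q * t ^ n)) (Dnq q n ybar t)) a) ∧
      Summable (nqSeq q n (fun t => fbar t (ybar (q * t ^ n)) (Dnq q n ybar t)) b) ∧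
      Summable (nqSeq q n (fun t =>
        f t (z (q * t ^ n) (ybar (q * t ^ n)))
          (Dnq q n (fun τ => z τ (ybar τ)) t)) a) ∧
      Summable (nqSeq q n (fun t =>
        f t (z (q * t ^ n) (ybar (q * t ^ n)))
          (Dnq q n (fun τ => z τ (ybar τ)) t)) b)) :
    (∀ ybar : ℝ → ℝ, Emem q n a b ybar →
      ybar a = zbar a α → ybar b = zbar b β →
      Lfun q n a b f (fun t => z t (ybar t)) - Lfun q n a b fbar ybar
        = G b (zbar b β) - G a (zbar a α)) ∧
    (∀ ybarstar : ℝ → ℝ, Emem q n a b ybarstar →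
      ybarstar a = zbar a α → ybarstar b = zbar b β →
      ((∀ ybar : ℝ → ℝ, Emem q n a b ybar →
          ybar a = zbar a α → ybar b = zbar b β →
          Lfun q n a b fbar ybarstar ≤ Lfun q n a b fbar ybar) →
        ∀ y : ℝ → ℝ, Emem q n a b y → y a = α → y b = β →
          Lfun q n a b f (fun t => z t (ybarstar t)) ≤ Lfun q n a b f y) ∧
      ((∀ ybar : ℝ → ℝ, Emem q n a b ybar →
          ybar a = zbar a α → ybar b = zbar b β →
          Lfun q n a b fbar ybar ≤ Lfun q n a b fbar ybarstar) →
        ∀ y : ℝ → ℝ, Emem q n a b y → y a = α → y b = β →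
          Lfun q n a b f y ≤ Lfun q n a b f (fun t => z t (ybarstar t)))) := by
  have hn1 : 1 ≤ n := hn.pos
  have P1 : ∀ ybar : ℝ → ℝ, Emem q n a b ybar →
      ybar a = zbar a α → ybar b = zbar b β →
      Lfun q n a b f (fun t => z t (ybar t)) - Lfun q n a b fbar ybar
        = G b (zbar b β) - G a (zbar a α) := by
    intro ybar hE hA hB
    obtain ⟨hpt, hGc, hsa, hsb, hfa, hfb, hFa, hFb⟩ := hG ybar hE hA hB
    set Gy : ℝ → ℝ := fun τ => G τ (ybar τ) with hGy
    set g1 : ℝ → ℝ := fun t =>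
      f t (z (q * t ^ n) (ybar (q * t ^ n))) (Dnq q n (fun τ => z τ (ybar τ)) t) with hg1
    set g2 : ℝ → ℝ := fun t => fbar t (ybar (q * t ^ n)) (Dnq q n ybar t) with hg2
    have hsplit : ∀ x : ℝ, nqOrbit q n x ⊆ nqInterval q n a b →
        ∀ k, nqSeq q n g1 x k = nqSeq q n g2 x k + nqSeq q n (Dnq q n Gy) x k := by
      intro x horb k
      have ht : tk q n x k ∈ nqInterval q n a b := horb (tk_mem_orbit q n x k)
      have h := hpt _ ht
      show q ^ nbr n k * x ^ n ^ k * (q ^ n ^ k * x ^ (n ^ k * (n - 1)) - 1) *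
          g1 (tk q n x k)
        = q ^ nbr n k * x ^ n ^ k * (q ^ n ^ k * x ^ (n ^ k * (n - 1)) - 1) *
          g2 (tk q n x k) +
          q ^ nbr n k * x ^ n ^ k * (q ^ n ^ k * x ^ (n ^ k * (n - 1)) - 1) *
          Dnq q n Gy (tk q n x k)
      have hg : g1 (tk q n x k) = g2 (tk q n x k) + Dnq q n Gy (tk q n x k) := by
        have : g1 (tk q n x k) - g2 (tk q n x k) = Dnq q n Gy (tk q n x k) := h
        linarith
      rw [hg]; ring
    have hint0 : ∀ x : ℝ, nqOrbit q n x ⊆ nqInterval q n a b →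
        Summable (nqSeq q n g2 x) → Summable (nqSeq q n (Dnq q n Gy) x) →
        nqInt0 q n g1 x = nqInt0 q n g2 x + nqInt0 q n (Dnq q n Gy) x := by
      intro x horb hs2 hs3
      unfold nqInt0
      have : (fun k => nqSeq q n g1 x k)
          = fun k => nqSeq q n g2 x k + nqSeq q n (Dnq q n Gy) x k :=
        funext (hsplit x horb)
      rw [show ∑' k, nqSeq q n g1 x k
          = ∑' k, (nqSeq q n g2 x k + nqSeq q n (Dnq q n Gy) x k) by rw [← this],
        Summable.tsum_add hs2 hs3]
      ring
    have hL1 : Lfun q n a b f (fun t => z t (ybar t)) = nqInt q n g1 a b := rfl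
    have hL2 : Lfun q n a b fbar ybar = nqInt q n g2 a b := rfl
    rw [hL1, hL2, nqInt, nqInt,
      hint0 a (orbit_subset_left q n a b) hfa hsa,
      hint0 b (orbit_subset_right q n a b) hfb hsb]
    have hftc : nqInt q n (Dnq q n Gy) a b = Gy b - Gy a :=
      nqInt_Dnq hq0 hq1 hn Gy ha hb hsa hsb hGc
    rw [nqInt] at hftc
    have hGb : Gy b = G b (zbar b β) := by rw [hGy]; simp only; rw [hB]
    have hGa : Gy a = G a (zbar a α) := by rw [hGy]; simp only; rw [hA]
    rw [← hGb, ← hGa]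
    linarith [hftc]
  refine ⟨P1, ?_⟩
  intro ys hEs hAs hBs
  have hys := P1 ys hEs hAs hBs
  constructor
  · intro hmin y hEy hya hyb
    have hEyb := hcorr2 y hEy
    have hba : (fun t => zbar t (y t)) a = zbar a α := by simp only; rw [hya]
    have hbb : (fun t => zbar t (y t)) b = zbar b β := by simp only; rw [hyb]
    have h2 := P1 _ hEyb hba hbb
    have h3 : Lfun q n a b f (fun t => z t ((fun s => zbar s (y s)) t))
        = Lfun q n a b f y := by
      apply Lfun_congr hq0 hn1 ha hb
      intro t ht
      simp only
      exact hinv2 t ht (y t)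
    have hm := hmin _ hEyb hba hbb
    rw [h3] at h2
    linarith
  · intro hmax y hEy hya hyb
    have hEyb := hcorr2 y hEy
    have hba : (fun t => zbar t (y t)) a = zbar a α := by simp only; rw [hya]
    have hbb : (fun t => zbar t (y t)) b = zbar b β := by simp only; rw [hyb]
    have h2 := P1 _ hEyb hba hbb
    have h3 : Lfun q n a b f (fun t => z t ((fun s => zbar s (y s)) t))
        = Lfun q n a b f y := by
      apply Lfun_congr hq0 hn1 ha hb
      intro t ht
      simp only
      exact hinv2 t ht (y t)
    have hm := hmax _ hEyb hba hbb
    rw [h3] at h2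
    linarith
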